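/- The operator Γ is upper semicontinuous along d̂-convergent sequences: for any sequence (ℓ^n)_{n≥1} ⊂ 𝕄 and ℓ ∈ 𝕄 with d̂(ℓ^n, ℓ) → 0, one has limsup_{n→∞} Γ[ℓ^n]_t ≤ Γ[ℓ]_t for all t ≥ 0. -/

import Mathlib

open MeasureTheory ProbabilityTheory Filter Set
open scoped ENNReal NNReal Classical

noncomputable section

/-- The first hitting time of `(-∞, 0]` by the path `x` after time `0`,
with value `∞` if the path never hits `(-∞, 0]`. -/
def hitTime (x : ℝ → ℝ) : ℝ≥0∞ :=
  ⨅ s ∈ {s : ℝ | 0 ≤ s ∧ x s ≤ 0}, ENNReal.ofReal s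

/-- Membership in the set `𝕄` of càdlàg non-decreasing functions `ℓ : [-1, ∞) → ℝ`
(encoded as functions on `ℝ`) which vanish on `[-1, 0)` and satisfy `lim_{t → ∞} ℓ t ≤ 1`
(equivalently, `ℓ ≤ 1` everywhere, by monotonicity). -/
structure MemM (ℓ : ℝ → ℝ) : Prop where
  zero_on_neg : ∀ t : ℝ, -1 ≤ t → t < 0 → ℓ t = 0
  mono : MonotoneOn ℓ (Set.Ici (-1 : ℝ))
  right_cont : ∀ t : ℝ, -1 ≤ t → ContinuousWithinAt ℓ (Set.Ici t) t
  le_one : ∀ t : ℝ, -1 ≤ t → ℓ t ≤ 1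

/-- The Lévy distance `d` on `𝕄`. -/
def levyDist (ℓ ℓ' : ℝ → ℝ) : ℝ :=
  sInf {ε : ℝ | 0 < ε ∧ ∀ t : ℝ, 0 ≤ t → ℓ' t ≤ ℓ (t + ε) + ε ∧ ℓ (t - ε) - ε ≤ ℓ' t}

/-- The path `ℓ` stopped at time `t`. -/
def stopAt (ℓ : ℝ → ℝ) (t : ℝ) : ℝ → ℝ := fun s => ℓ (min t s)

/-- The metric `d̂(ℓ, ℓ') = ∫₀^∞ e^{-s} (d(ℓ_{s∧·}, ℓ'_{s∧·}) ∧ 1) ds` on `𝕄`. -/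
def dHat (ℓ ℓ' : ℝ → ℝ) : ℝ :=
  ∫ s in Set.Ioi (0 : ℝ), Real.exp (-s) * min (levyDist (stopAt ℓ s) (stopAt ℓ' s)) 1

/-- A process `B : ℝ → Ω → ℝ` (considered for times `t ≥ 0`) is a standard Brownian motion
under `P`: it starts at `0`, has a.s. continuous paths, independent increments, and Gaussian
increments `B t - B s ~ N(0, t - s)`. -/
structure IsStandardBM {Ω : Type*} [MeasurableSpace Ω] (P : Measure Ω) (B : ℝ → Ω → ℝ) :
    Prop where
  meas : ∀ t : ℝ, Measurable (B t)
  init : ∀ᵐ ω ∂P, B 0 ω = 0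
  cont : ∀ᵐ ω ∂P, ContinuousOn (fun t => B t ω) (Set.Ici (0 : ℝ))
  incr_law : ∀ s t : ℝ, 0 ≤ s → s ≤ t →
    P.map (fun ω => B t ω - B s ω) = gaussianReal 0 (Real.toNNReal (t - s))
  indep_incr : ∀ (n : ℕ) (τ : Fin (n + 1) → ℝ), Monotone τ → (∀ i, 0 ≤ τ i) →
    iIndepFun
      (fun i : Fin n => fun ω => B (τ i.succ) ω - B (τ i.castSucc) ω) P

/-- The filtration generated by the family of Brownian motions `B i`, evaluated at time `t`. -/
def bmFiltration {Ω ι : Type*} [MeasurableSpace Ω] (B : ι → ℝ → Ω → ℝ) (t : ℝ) :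
    MeasurableSpace Ω :=
  ⨆ (i : ι) (s : ℝ) (_ : 0 ≤ s) (_ : s ≤ t), MeasurableSpace.comap (B i s) inferInstance

/-- Set-up of the `N`-particle system: i.i.d. initial conditions `Z i` with common law `θ`
(supported on `[0,∞)`), independent standard Brownian motions `B i`, with the pairs
`(Z i, B i)` mutually independent and `Z i` independent of `B i`. -/
structure ParticleSetup (N : ℕ) {Ω : Type*} [MeasurableSpace Ω] (P : Measure Ω)
    (θ : Measure ℝ) (Z : Fin N → Ω → ℝ) (B : Fin N → ℝ → Ω → ℝ) : Prop where
  isProb : IsProbabilityMeasure P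
  z_meas : ∀ i, Measurable (Z i)
  z_law : ∀ i, P.map (Z i) = θ
  z_nonneg : ∀ i, ∀ᵐ ω ∂P, 0 ≤ Z i ω
  bm : ∀ i, IsStandardBM P (B i)
  indep_pairs : iIndepFun
    (fun (i : Fin N) => fun ω => ((Z i ω, fun t => B i t ω) : ℝ × (ℝ → ℝ))) P
  indep_zb : ∀ i, IndepFun (Z i) (fun ω => (fun t => B i t ω) : Ω → ℝ → ℝ) P

/-- `(X, L)` is a solution of the interacting particle system
`X^i_t = Z^i + β t + B^i_t − G(L_t)`, `L_t = (1/N) ∑_i 1{τ_i ≤ t}`. -/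
structure IsParticleSolution (N : ℕ) (β : ℝ) (G : ℝ → ℝ) {Ω : Type*} [MeasurableSpace Ω]
    (P : Measure Ω) (Z : Fin N → Ω → ℝ) (B : Fin N → ℝ → Ω → ℝ)
    (X : Fin N → ℝ → Ω → ℝ) (L : Ω → ℝ → ℝ) : Prop where
  memM : ∀ᵐ ω ∂P, MemM (L ω)
  adapted : ∀ t : ℝ, 0 ≤ t → Measurable[bmFiltration B t] (fun ω => L ω t)
  eqX : ∀ᵐ ω ∂P, ∀ i, ∀ t : ℝ, 0 ≤ t →
    X i t ω = Z i ω + β * t + B i t ω - G (L ω t)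
  eqL : ∀ᵐ ω ∂P, ∀ t : ℝ, 0 ≤ t →
    L ω t = (N : ℝ)⁻¹ *
      (Finset.univ.filter fun i : Fin N =>
        hitTime (fun s => X i s ω) ≤ ENNReal.ofReal t).card

/-- Set-up for the McKean–Vlasov equation: an initial condition `Z ≥ 0` with law `θ` and an
independent standard Brownian motion `B`. -/
structure MVSetup {Ω : Type*} [MeasurableSpace Ω] (P : Measure Ω) (θ : Measure ℝ)
    (Z : Ω → ℝ) (B : ℝ → Ω → ℝ) : Prop where
  isProb : IsProbabilityMeasure P
  z_meas : Measurable Z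
  z_law : P.map Z = θ
  z_nonneg : ∀ᵐ ω ∂P, 0 ≤ Z ω
  bm : IsStandardBM P B
  indep : IndepFun Z (fun ω => (fun t => B t ω) : Ω → ℝ → ℝ) P

/-- `(X, Λ)` is a solution of the McKean–Vlasov equation
`X_t = Z + β t + B_t − G(Λ_t)`, `Λ_t = P(τ ≤ t)` with `τ = inf{t ≥ 0 : X_t ≤ 0}`. -/
structure IsMVSolution (β : ℝ) (G : ℝ → ℝ) {Ω : Type*} [MeasurableSpace Ω] (P : Measure Ω)
    (Z : Ω → ℝ) (B : ℝ → Ω → ℝ) (X : ℝ → Ω → ℝ) (Λ : ℝ → ℝ) : Prop where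
  memM : MemM Λ
  eqX : ∀ᵐ ω ∂P, ∀ t : ℝ, 0 ≤ t → X t ω = Z ω + β * t + B t ω - G (Λ t)
  eqΛ : ∀ t : ℝ, 0 ≤ t →
    Λ t = (P {ω | hitTime (fun s => X s ω) ≤ ENNReal.ofReal t}).toReal


/-- The operator `Γ : 𝕄 → 𝕄`, `Γ[ℓ]_t = P(τ^ℓ ≤ t)` where
`X^ℓ_t = Z + β t + B_t − G(ℓ_t)` and `τ^ℓ = inf{t ≥ 0 : X^ℓ_t ≤ 0}`
(extended by `0` for `t < 0`). -/
def GammaOp {Ω : Type*} [MeasurableSpace Ω] (P : Measure Ω) (Z : Ω → ℝ) (B : ℝ → Ω → ℝ)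
    (β : ℝ) (G : ℝ → ℝ) (ℓ : ℝ → ℝ) (t : ℝ) : ℝ :=
  if t < 0 then 0
  else (P {ω | hitTime (fun s => Z ω + β * s + B s ω - G (ℓ s)) ≤ ENNReal.ofReal t}).toReal

lemma MemM.nonneg {ℓ : ℝ → ℝ} (h : MemM ℓ) (u : ℝ) (hu : -1 ≤ u) : 0 ≤ ℓ u := by
  have h0 : ℓ (-1) = 0 := h.zero_on_neg _ le_rfl (by norm_num)
  rw [← h0]
  exact h.mono (by norm_num) hu hu

lemma MemM.mem_Icc {ℓ : ℝ → ℝ} (h : MemM ℓ) (u : ℝ) (hu : -1 ≤ u) :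
    ℓ u ∈ Set.Icc (-1 : ℝ) 1 :=
  ⟨le_trans (by norm_num) (h.nonneg u hu), h.le_one u hu⟩

/-- The admissibility set for the stopped Lévy distance. -/
def Kset (ℓ₁ ℓ₂ : ℝ → ℝ) (s : ℝ) : Set ℝ :=
  {ε | 0 < ε ∧ ∀ t : ℝ, 0 ≤ t →
    (ℓ₂ (min s t) ≤ ℓ₁ (min s (t + ε)) + ε ∧ ℓ₁ (min s (t - ε)) - ε ≤ ℓ₂ (min s t))}

lemma levy_stop_eq (ℓ₁ ℓ₂ : ℝ → ℝ) (s : ℝ) :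
    levyDist (stopAt ℓ₁ s) (stopAt ℓ₂ s) = sInf (Kset ℓ₁ ℓ₂ s) := rfl

lemma min_mem_Ici {s u : ℝ} (hs : 0 ≤ s) (hu : -1 ≤ u) : -1 ≤ min s u :=
  le_min (by linarith) hu

lemma one_mem_Kset {ℓ₁ ℓ₂ : ℝ → ℝ} (h₁ : MemM ℓ₁) (h₂ : MemM ℓ₂) {s : ℝ} (hs : 0 ≤ s) :
    (1 : ℝ) ∈ Kset ℓ₁ ℓ₂ s := by
  refine ⟨one_pos, fun t ht => ⟨?_, ?_⟩⟩
  · have hb : ℓ₂ (min s t) ≤ 1 := h₂.le_one _ (min_mem_Ici hs (by linarith))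
    have hc : 0 ≤ ℓ₁ (min s (t + 1)) := h₁.nonneg _ (min_mem_Ici hs (by linarith))
    linarith
  · have hb : ℓ₁ (min s (t - 1)) ≤ 1 := h₁.le_one _ (min_mem_Ici hs (by linarith))
    have hc : 0 ≤ ℓ₂ (min s t) := h₂.nonneg _ (min_mem_Ici hs (by linarith))
    linarith

lemma Kset_bddBelow (ℓ₁ ℓ₂ : ℝ → ℝ) (s : ℝ) : BddBelow (Kset ℓ₁ ℓ₂ s) :=
  ⟨0, fun x hx => hx.1.le⟩

lemma Kset_nonneg (ℓ₁ ℓ₂ : ℝ → ℝ) (s : ℝ) : 0 ≤ sInf (Kset ℓ₁ ℓ₂ s) :=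
  Real.sInf_nonneg (fun x hx => hx.1.le)

lemma Kset_sInf_le_one {ℓ₁ ℓ₂ : ℝ → ℝ} (h₁ : MemM ℓ₁) (h₂ : MemM ℓ₂) {s : ℝ} (hs : 0 ≤ s) :
    sInf (Kset ℓ₁ ℓ₂ s) ≤ 1 :=
  csInf_le (Kset_bddBelow ℓ₁ ℓ₂ s) (one_mem_Kset h₁ h₂ hs)

/-- Upward closedness of the admissibility set within `(0,1]`. -/
lemma Kset_up {ℓ₁ ℓ₂ : ℝ → ℝ} (h₁ : MemM ℓ₁) (h₂ : MemM ℓ₂) {s ε ε' : ℝ} (hs : 0 ≤ s)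
    (hε : ε ∈ Kset ℓ₁ ℓ₂ s) (h1 : ε ≤ ε') (h2 : ε' ≤ 1) : ε' ∈ Kset ℓ₁ ℓ₂ s := by
  obtain ⟨hεpos, hcond⟩ := hε
  refine ⟨lt_of_lt_of_le hεpos h1, fun t ht => ?_⟩
  obtain ⟨hA, hB⟩ := hcond t ht
  constructor
  · have : ℓ₁ (min s (t + ε)) ≤ ℓ₁ (min s (t + ε')) :=
      h₁.mono (min_mem_Ici hs (by linarith)) (min_mem_Ici hs (by linarith))
        (min_le_min le_rfl (by linarith))
    linarith
  · have : ℓ₁ (min s (t - ε')) ≤ ℓ₁ (min s (t - ε)) :=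
      h₁.mono (min_mem_Ici hs (by linarith)) (min_mem_Ici hs (by linarith))
        (min_le_min le_rfl (by linarith))
    linarith

lemma Kset_lt_iff {ℓ₁ ℓ₂ : ℝ → ℝ} (h₁ : MemM ℓ₁) (h₂ : MemM ℓ₂) {s δ : ℝ} (hs : 0 ≤ s)
    (hδ0 : 0 < δ) (hδ1 : δ ≤ 1) :
    sInf (Kset ℓ₁ ℓ₂ s) < δ ↔ ∃ q : ℚ, 0 < (q : ℝ) ∧ (q : ℝ) < δ ∧ (q : ℝ) ∈ Kset ℓ₁ ℓ₂ s := by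
  constructor
  · intro h
    obtain ⟨ε, hεK, hεδ⟩ :=
      (csInf_lt_iff (Kset_bddBelow ℓ₁ ℓ₂ s) ⟨1, one_mem_Kset h₁ h₂ hs⟩).1 h
    obtain ⟨q, hq1, hq2⟩ := exists_rat_btwn hεδ
    exact ⟨q, lt_trans hεK.1 hq1, hq2,
      Kset_up h₁ h₂ hs hεK hq1.le (by linarith)⟩
  · rintro ⟨q, hq0, hqδ, hqK⟩
    exact lt_of_le_of_lt (csInf_le (Kset_bddBelow ℓ₁ ℓ₂ s) hqK) hqδ

/-- A rational test for membership in `Kset`, via right-continuity in `t`. -/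
lemma Kset_rat_test {ℓ₁ ℓ₂ : ℝ → ℝ} (h₁ : MemM ℓ₁) (h₂ : MemM ℓ₂) {s ε : ℝ} (hs : 0 ≤ s)
    (hε0 : 0 < ε) (hε1 : ε ≤ 1)
    (h : ∀ t : ℚ, 0 ≤ (t : ℝ) →
      (ℓ₂ (min s t) ≤ ℓ₁ (min s (t + ε)) + ε ∧ ℓ₁ (min s (t - ε)) - ε ≤ ℓ₂ (min s t))) :
    ε ∈ Kset ℓ₁ ℓ₂ s := by
  refine ⟨hε0, fun t ht => ?_⟩
  -- choose rationals decreasing to t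
  obtain ⟨u, hu1, hu2⟩ : ∃ u : ℕ → ℚ, (∀ k, t < u k ∧ (u k : ℝ) < t + 1 / (k + 1)) ∧
      Tendsto (fun k => (u k : ℝ)) atTop (nhds t) := by
    have hchoice : ∀ k : ℕ, ∃ q : ℚ, t < (q : ℝ) ∧ (q : ℝ) < t + 1 / (k + 1) := by
      intro k
      refine exists_rat_btwn ?_
      have : (0:ℝ) < 1 / ((k:ℝ) + 1) := by positivity
      linarith
    choose u hu1 hu2 using hchoice
    refine ⟨u, fun k => ⟨hu1 k, hu2 k⟩, ?_⟩
    have h1 : Tendsto (fun k : ℕ => t + 1 / ((k : ℝ) + 1)) atTop (nhds (t + 0)) :=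
      tendsto_const_nhds.add tendsto_one_div_add_atTop_nhds_zero_nat
    rw [add_zero] at h1
    exact tendsto_of_tendsto_of_tendsto_of_le_of_le tendsto_const_nhds h1
      (fun k => (hu1 k).le) (fun k => (hu2 k).le)
  -- right-continuity of u ↦ ℓ (min s u) at each point ≥ -1
  have key : ∀ (ℓ : ℝ → ℝ), MemM ℓ → ∀ (c : ℝ), -1 ≤ c →
      Tendsto (fun k => ℓ (min s ((u k : ℝ) + c))) atTop (nhds (ℓ (min s (t + c)))) := by
    intro ℓ hℓ c hc
    have harg : Tendsto (fun k => min s ((u k : ℝ) + c)) atTop (nhds (min s (t + c))) := by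
      exact (tendsto_const_nhds.min (hu2.add tendsto_const_nhds))
    have hmem : -1 ≤ min s (t + c) := min_mem_Ici hs (by linarith)
    have hcont := (hℓ.right_cont _ hmem).tendsto
    refine hcont.comp (tendsto_nhdsWithin_of_tendsto_nhds_of_eventually_within _ harg ?_)
    filter_upwards with k
    simp only [Set.mem_Ici]
    have := (hu1 k).1
    exact min_le_min le_rfl (by linarith)
  have keyt : Tendsto (fun k => ℓ₂ (min s (u k : ℝ))) atTop (nhds (ℓ₂ (min s t))) := by
    simpa using key ℓ₂ h₂ 0 (by norm_num)
  constructor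
  · refine le_of_tendsto_of_tendsto keyt (((key ℓ₁ h₁ ε (by linarith)).add tendsto_const_nhds)) ?_
    filter_upwards with k
    exact (h (u k) (by have := (hu1 k).1; push_cast; linarith)).1
  · refine le_of_tendsto_of_tendsto
      (((key ℓ₁ h₁ (-ε) (by linarith)).sub tendsto_const_nhds)) keyt ?_
    filter_upwards with k
    have := (h (u k) (by have := (hu1 k).1; push_cast; linarith)).2
    simpa [sub_eq_add_neg] using this

lemma meas_piece {ℓ : ℝ → ℝ} (hℓ : MemM ℓ) (c : ℝ) (hc : -1 ≤ c) :
    Measurable (fun s : ℝ => ℓ (min (max s 0) c)) := by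
  have hmem : ∀ a : ℝ, -1 ≤ min (max a 0) c := by
    intro a
    exact le_min (le_trans (by norm_num) (le_max_right a 0)) hc
  have hmono : Monotone (fun s : ℝ => ℓ (min (max s 0) c)) := by
    intro a b hab
    exact hℓ.mono (hmem a) (hmem b) (min_le_min (max_le_max hab le_rfl) le_rfl)
  exact hmono.measurable

lemma measurable_stopLevy {ℓ₁ ℓ₂ : ℝ → ℝ} (h₁ : MemM ℓ₁) (h₂ : MemM ℓ₂) :
    Measurable (fun s : ℝ => sInf (Kset ℓ₁ ℓ₂ (max s 0))) := by
  apply measurable_of_Iio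
  intro δ
  rcases le_or_gt δ 0 with hδ | hδ0
  · have : (fun s : ℝ => sInf (Kset ℓ₁ ℓ₂ (max s 0))) ⁻¹' Iio δ = ∅ := by
      ext s
      simp only [mem_preimage, mem_Iio, mem_empty_iff_false, iff_false, not_lt]
      exact le_trans hδ (Kset_nonneg _ _ _)
    rw [this]; exact MeasurableSet.empty
  rcases lt_or_ge (1 : ℝ) δ with hδ1 | hδ1
  · have : (fun s : ℝ => sInf (Kset ℓ₁ ℓ₂ (max s 0))) ⁻¹' Iio δ = univ := by
      ext s
      simp only [mem_preimage, mem_Iio, mem_univ, iff_true]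
      exact lt_of_le_of_lt (Kset_sInf_le_one h₁ h₂ (le_max_right s 0)) hδ1
    rw [this]; exact MeasurableSet.univ
  · have heq : (fun s : ℝ => sInf (Kset ℓ₁ ℓ₂ (max s 0))) ⁻¹' Iio δ =
        ⋃ q : ℚ, ⋃ (_ : 0 < (q : ℝ) ∧ (q : ℝ) < δ), ⋂ t : ℚ, ⋂ (_ : 0 ≤ (t : ℝ)),
          {s : ℝ | ℓ₂ (min (max s 0) t) ≤ ℓ₁ (min (max s 0) ((t : ℝ) + q)) + q ∧
            ℓ₁ (min (max s 0) ((t : ℝ) - q)) - q ≤ ℓ₂ (min (max s 0) t)} := by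
      ext s
      simp only [mem_preimage, mem_Iio, mem_iUnion, mem_iInter, mem_setOf_eq]
      rw [Kset_lt_iff h₁ h₂ (le_max_right s 0) hδ0 hδ1]
      constructor
      · rintro ⟨q, hq0, hqδ, hqK⟩
        exact ⟨q, ⟨hq0, hqδ⟩, fun t ht => hqK.2 t ht⟩
      · rintro ⟨q, ⟨hq0, hqδ⟩, hall⟩
        exact ⟨q, hq0, hqδ,
          Kset_rat_test h₁ h₂ (le_max_right s 0) hq0 (by linarith) hall⟩
    rw [heq]
    refine MeasurableSet.iUnion fun q => MeasurableSet.iUnion fun hq =>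
      MeasurableSet.iInter fun t => MeasurableSet.iInter fun ht => ?_
    refine MeasurableSet.inter ?_ ?_
    · exact measurableSet_le (meas_piece h₂ t (by linarith))
        ((meas_piece h₁ ((t : ℝ) + q) (by linarith [hq.1])).add_const _)
    · exact measurableSet_le
        ((meas_piece h₁ ((t : ℝ) - q) (by linarith [hq.1, hq.2])).sub_const _)
        (meas_piece h₂ t (by linarith))

lemma dHat_lower {ℓ₁ ℓ₂ : ℝ → ℝ} (h₁ : MemM ℓ₁) (h₂ : MemM ℓ₂) {a b δ : ℝ}
    (ha : 0 < a) (hab : a ≤ b) (hδ0 : 0 < δ) (hδ1 : δ ≤ 1)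
    (h : ∀ s ∈ Icc a b, δ ≤ min (sInf (Kset ℓ₁ ℓ₂ s)) 1) :
    Real.exp (-b) * δ * (b - a) ≤ dHat ℓ₁ ℓ₂ := by
  set g : ℝ → ℝ := fun s => Real.exp (-s) * min (sInf (Kset ℓ₁ ℓ₂ (max s 0))) 1 with hg
  have hgmeas : Measurable g := by
    exact (Real.measurable_exp.comp measurable_neg).mul
      ((measurable_stopLevy h₁ h₂).min measurable_const)
  have hgbound : ∀ s : ℝ, 0 ≤ s → 0 ≤ g s ∧ g s ≤ Real.exp (-s) := by
    intro s hs
    have h0 : 0 ≤ min (sInf (Kset ℓ₁ ℓ₂ (max s 0))) 1 :=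
      le_min (Kset_nonneg _ _ _) one_pos.le
    have h1 : min (sInf (Kset ℓ₁ ℓ₂ (max s 0))) 1 ≤ 1 := min_le_right _ _
    constructor
    · exact mul_nonneg (Real.exp_pos _).le h0
    · have h2 := mul_le_mul_of_nonneg_left h1 (Real.exp_pos (-s)).le
      simpa [hg] using h2
  have hexpint : IntegrableOn (fun s : ℝ => Real.exp (-s)) (Ioi (0 : ℝ)) := by
    have := exp_neg_integrableOn_Ioi 0 (one_pos (α := ℝ))
    simpa using this
  have hgint : IntegrableOn g (Ioi (0 : ℝ)) := by
    refine Integrable.mono hexpint hgmeas.aestronglyMeasurable ?_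
    filter_upwards [self_mem_ae_restrict measurableSet_Ioi] with s hs
    obtain ⟨hb1, hb2⟩ := hgbound s (le_of_lt hs)
    rw [Real.norm_eq_abs, Real.norm_eq_abs, abs_of_nonneg hb1,
      abs_of_pos (Real.exp_pos _)]
    exact hb2
  have heq : dHat ℓ₁ ℓ₂ = ∫ s in Ioi (0 : ℝ), g s := by
    refine setIntegral_congr_fun measurableSet_Ioi ?_
    intro s hs
    have hmax : max s 0 = s := max_eq_left (le_of_lt hs)
    simp only [hg, hmax, levy_stop_eq]
  have hsub : ∫ s in Icc a b, g s ≤ ∫ s in Ioi (0 : ℝ), g s := by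
    refine setIntegral_mono_set hgint ?_ ?_
    · filter_upwards [self_mem_ae_restrict measurableSet_Ioi] with s hs
      exact (hgbound s (le_of_lt hs)).1
    · filter_upwards with s hs
      exact lt_of_lt_of_le ha hs.1
  have hlow : ∫ s in Icc a b, (Real.exp (-b) * δ) ≤ ∫ s in Icc a b, g s := by
    refine setIntegral_mono_on ((integrableOn_const_iff).2 ?_) (hgint.mono_set ?_)
      measurableSet_Icc ?_
    · right; rw [Real.volume_Icc]; exact ENNReal.ofReal_lt_top
    · intro s hs; exact lt_of_lt_of_le ha hs.1
    · intro s hs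
      have hs0 : (0 : ℝ) < s := lt_of_lt_of_le ha hs.1
      have hmin : δ ≤ min (sInf (Kset ℓ₁ ℓ₂ (max s 0))) 1 := by
        rw [max_eq_left hs0.le]
        exact h s hs
      have hexp : Real.exp (-b) ≤ Real.exp (-s) :=
        Real.exp_le_exp.2 (by linarith [hs.2])
      have := (hgbound s hs0.le).1
      calc Real.exp (-b) * δ ≤ Real.exp (-s) * δ := by nlinarith [Real.exp_pos (-b)]
        _ ≤ Real.exp (-s) * min (sInf (Kset ℓ₁ ℓ₂ (max s 0))) 1 := by
            nlinarith [Real.exp_pos (-s)]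
  have hconst : ∫ _s in Icc a b, (Real.exp (-b) * δ) = (b - a) * (Real.exp (-b) * δ) := by
    rw [setIntegral_const, Real.volume_real_Icc_of_le hab, smul_eq_mul]
  rw [heq]
  calc Real.exp (-b) * δ * (b - a) = (b - a) * (Real.exp (-b) * δ) := by ring
    _ = ∫ _s in Icc a b, (Real.exp (-b) * δ) := hconst.symm
    _ ≤ ∫ s in Icc a b, g s := hlow
    _ ≤ ∫ s in Ioi (0 : ℝ), g s := hsub

lemma eventually_levy_bound {ℓn : ℕ → ℝ → ℝ} {ℓ : ℝ → ℝ} (hℓn : ∀ n, MemM (ℓn n))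
    (hℓ : MemM ℓ) (hconv : Tendsto (fun n => dHat (ℓn n) ℓ) atTop (nhds 0))
    {t δ : ℝ} (ht : 0 ≤ t) (hδ0 : 0 < δ) (hδ1 : δ ≤ 1) :
    ∀ᶠ n in atTop, ∀ u : ℝ, 0 ≤ u → u ≤ t + 1 → ℓn n u ≤ ℓ (u + δ) + δ := by
  set c : ℝ := Real.exp (-(t + 3)) * δ * ((t + 3) - (t + 2)) with hcdef
  have hc : 0 < c := by
    have := Real.exp_pos (-(t + 3))
    rw [hcdef]
    nlinarith
  have hev : ∀ᶠ n in atTop, dHat (ℓn n) ℓ < c := hconv.eventually (eventually_lt_nhds hc)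
  filter_upwards [hev] with n hn
  by_contra hcon
  push_neg at hcon
  obtain ⟨u, hu0, hut, hlt⟩ := hcon
  have hclaim : ∀ s ∈ Icc (t + 2) (t + 3), δ ≤ min (sInf (Kset (ℓn n) ℓ s)) 1 := by
    intro s hs
    have hs0 : (0 : ℝ) ≤ s := by linarith [hs.1]
    refine le_min ?_ hδ1
    by_contra h'
    push_neg at h'
    obtain ⟨q, hq0, hqδ, hqK⟩ := (Kset_lt_iff (hℓn n) hℓ hs0 hδ0 hδ1).1 h'
    have h2 := (hqK.2 (u + q) (by linarith)).2
    have he : u + q - q = u := by ring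
    rw [he] at h2
    rw [min_eq_right (by linarith [hs.1] : u ≤ s)] at h2
    rw [min_eq_right (by linarith [hs.1] : u + q ≤ s)] at h2
    have hmono : ℓ (u + q) ≤ ℓ (u + δ) :=
      hℓ.mono (by simp only [mem_Ici]; linarith) (by simp only [mem_Ici]; linarith)
        (by linarith)
    linarith
  have hbound := dHat_lower (hℓn n) hℓ (a := t + 2) (b := t + 3)
    (by linarith) (by linarith) hδ0 hδ1 hclaim
  rw [← hcdef] at hbound
  linarith

/-- The deterministic pathwise limit lemma. -/
lemma pathwise_limit {β : ℝ} {G : ℝ → ℝ}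
    (hGcont : ContinuousOn G (Set.Icc (-1 : ℝ) 1))
    (hGmono : MonotoneOn G (Set.Icc (-1 : ℝ) 1))
    {ℓ : ℝ → ℝ} (hℓ : MemM ℓ) {z : ℝ} {Bp : ℝ → ℝ}
    (hB : ContinuousOn Bp (Set.Ici (0 : ℝ))) {t : ℝ} (ht : 0 ≤ t)
    (hyp : ∀ j : ℕ, ∃ q : ℝ, 0 ≤ q ∧ q ≤ t + 1 / (j + 1) ∧
      z + β * q + Bp q ≤ 1 / (j + 1) + G (min (ℓ (q + 1 / (j + 1)) + 1 / (j + 1)) 1)) :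
    hitTime (fun s => z + β * s + Bp s - G (ℓ s)) ≤ ENNReal.ofReal t := by
  choose q hq0 hq1 hq2 using hyp
  have hinv : ∀ j : ℕ, (0 : ℝ) < 1 / ((j : ℝ) + 1) := fun j => by positivity
  have hinvle : ∀ j : ℕ, (1 : ℝ) / ((j : ℝ) + 1) ≤ 1 := fun j => by
    rw [div_le_one (by positivity)]; linarith [Nat.cast_nonneg (α := ℝ) j]
  have hinv_anti : ∀ j k : ℕ, j ≤ k → (1 : ℝ) / ((k : ℝ) + 1) ≤ 1 / ((j : ℝ) + 1) := by
    intro j k hjk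
    apply one_div_le_one_div_of_le (by positivity)
    have : (j : ℝ) ≤ (k : ℝ) := by exact_mod_cast hjk
    linarith
  have hinv0 : Tendsto (fun j : ℕ => 1 / ((j : ℝ) + 1)) atTop (nhds 0) :=
    tendsto_one_div_add_atTop_nhds_zero_nat
  have hqmem : ∀ j, q j ∈ Icc (0 : ℝ) (t + 1) := fun j =>
    ⟨hq0 j, le_trans (hq1 j) (by linarith [hinvle j])⟩
  obtain ⟨sstar, hsmem, φ, hφ, hqφ⟩ :=
    tendsto_subseq_of_bounded (Metric.isBounded_Icc (0 : ℝ) (t + 1)) hqmem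
  rw [closure_Icc] at hsmem
  have hs0 : 0 ≤ sstar := hsmem.1
  have hst : sstar ≤ t := by
    have htt : Tendsto (fun j : ℕ => t + 1 / ((j : ℝ) + 1)) atTop (nhds t) := by
      have := tendsto_const_nhds (x := t) (f := atTop (α := ℕ)) |>.add hinv0
      simpa using this
    refine le_of_tendsto_of_tendsto hqφ htt ?_
    filter_upwards with j
    exact le_trans (hq1 (φ j)) (by
      have := hinv_anti j (φ j) (hφ.le_apply)
      linarith)
  -- Claim A
  have claimA : ∀ ρ : ℝ, 0 < ρ → z + β * sstar + Bp sstar ≤ G (ℓ (sstar + ρ)) := by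
    intro ρ hρ
    refine le_of_forall_pos_le_add ?_
    intro ε hε
    -- uniform continuity of G
    have hunif : UniformContinuousOn G (Icc (-1 : ℝ) 1) :=
      isCompact_Icc.uniformContinuousOn_of_continuous hGcont
    rw [Metric.uniformContinuousOn_iff] at hunif
    obtain ⟨δG, hδG0, hδG⟩ := hunif ε hε
    obtain ⟨m, hm⟩ := exists_nat_one_div_lt (lt_min_iff.2 ⟨hδG0, half_pos hρ⟩)
    have hmδ : (1 : ℝ) / ((m : ℝ) + 1) < δG := lt_of_lt_of_le hm (min_le_left _ _)
    have hmρ : (1 : ℝ) / ((m : ℝ) + 1) < ρ / 2 := lt_of_lt_of_le hm (min_le_right _ _)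
    -- eventual bound
    have hev : ∀ᶠ j in atTop, z + β * q (φ j) + Bp (q (φ j)) ≤
        1 / ((j : ℝ) + 1) + (G (ℓ (sstar + ρ)) + ε) := by
      have hev1 : ∀ᶠ j in atTop, q (φ j) < sstar + ρ / 2 :=
        hqφ.eventually (eventually_lt_nhds (by linarith))
      have hev2 : ∀ᶠ j in atTop, m ≤ j := eventually_ge_atTop m
      filter_upwards [hev1, hev2] with j hj1 hj2
      set η : ℝ := 1 / ((φ j : ℝ) + 1) with hη
      have hηm : η ≤ 1 / ((m : ℝ) + 1) := hinv_anti m (φ j) (le_trans hj2 hφ.le_apply)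
      have hηj : η ≤ 1 / ((j : ℝ) + 1) := hinv_anti j (φ j) hφ.le_apply
      have hη0 : 0 < η := hinv (φ j)
      have harg : -1 ≤ q (φ j) + η := by linarith [hq0 (φ j)]
      have hx : ℓ (q (φ j) + η) ∈ Icc (-1 : ℝ) 1 := hℓ.mem_Icc _ harg
      have hy : min (ℓ (q (φ j) + η) + η) 1 ∈ Icc (-1 : ℝ) 1 := by
        constructor
        · exact le_min (by linarith [hx.1]) (by norm_num)
        · exact min_le_right _ _
      have hdist : dist (min (ℓ (q (φ j) + η) + η) 1) (ℓ (q (φ j) + η)) < δG := by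
        rw [Real.dist_eq, abs_of_nonneg (by
          have : ℓ (q (φ j) + η) ≤ 1 := hx.2
          have : ℓ (q (φ j) + η) ≤ min (ℓ (q (φ j) + η) + η) 1 :=
            le_min (by linarith) this
          linarith)]
        have : min (ℓ (q (φ j) + η) + η) 1 ≤ ℓ (q (φ j) + η) + η := min_le_left _ _
        linarith [lt_of_le_of_lt hηm hmδ]
      have hG1 : G (min (ℓ (q (φ j) + η) + η) 1) ≤ G (ℓ (q (φ j) + η)) + ε := by
        have := hδG _ hy _ hx hdist
        rw [Real.dist_eq] at this
        have := abs_lt.1 this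
        linarith [this.1]
      have hG2 : G (ℓ (q (φ j) + η)) ≤ G (ℓ (sstar + ρ)) := by
        refine hGmono (hℓ.mem_Icc _ harg) (hℓ.mem_Icc _ (by linarith)) ?_
        refine hℓ.mono (by simp only [mem_Ici]; linarith) (by simp only [mem_Ici]; linarith) ?_
        have : η ≤ ρ / 2 := le_trans hηm hmρ.le
        linarith
      have := hq2 (φ j)
      rw [← hη] at this
      linarith
    -- pass to the limit
    have hlhs : Tendsto (fun j => z + β * q (φ j) + Bp (q (φ j))) atTop
        (nhds (z + β * sstar + Bp sstar)) := by
      have hBs : Tendsto (fun j => Bp (q (φ j))) atTop (nhds (Bp sstar)) := by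
        have hcont := (hB sstar hs0).tendsto
        refine hcont.comp (tendsto_nhdsWithin_of_tendsto_nhds_of_eventually_within _ hqφ ?_)
        filter_upwards with j using hq0 (φ j)
      exact (tendsto_const_nhds.add (hqφ.const_mul β)).add hBs
    have hrhs : Tendsto (fun j : ℕ => 1 / ((j : ℝ) + 1) + (G (ℓ (sstar + ρ)) + ε)) atTop
        (nhds (G (ℓ (sstar + ρ)) + ε)) := by
      have := hinv0.add (tendsto_const_nhds (x := G (ℓ (sstar + ρ)) + ε))
      simpa using this
    exact le_of_tendsto_of_tendsto hlhs hrhs hev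
  -- limit ρ → 0
  have hX : z + β * sstar + Bp sstar ≤ G (ℓ sstar) := by
    have hGcont' : Tendsto (fun k : ℕ => G (ℓ (sstar + 1 / ((k : ℝ) + 1)))) atTop
        (nhds (G (ℓ sstar))) := by
      have hℓc : Tendsto (fun k : ℕ => ℓ (sstar + 1 / ((k : ℝ) + 1))) atTop
          (nhds (ℓ sstar)) := by
        have hcont := (hℓ.right_cont sstar (by linarith)).tendsto
        refine hcont.comp (tendsto_nhdsWithin_of_tendsto_nhds_of_eventually_within _ ?_ ?_)
        · have := tendsto_const_nhds (x := sstar) (f := atTop (α := ℕ)) |>.add hinv0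
          simpa using this
        · filter_upwards with k
          simp only [mem_Ici]
          linarith [hinv k]
      have hGc := (hGcont (ℓ sstar) (hℓ.mem_Icc _ (by linarith))).tendsto
      refine hGc.comp (tendsto_nhdsWithin_of_tendsto_nhds_of_eventually_within _ hℓc ?_)
      filter_upwards with k using hℓ.mem_Icc _ (by linarith [hinv k])
    refine le_of_tendsto_of_tendsto tendsto_const_nhds hGcont' ?_
    filter_upwards with k using claimA _ (hinv k)
  -- conclude
  have hmem : sstar ∈ {s : ℝ | 0 ≤ s ∧ z + β * s + Bp s - G (ℓ s) ≤ 0} :=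
    ⟨hs0, by linarith⟩
  calc hitTime (fun s => z + β * s + Bp s - G (ℓ s)) ≤ ENNReal.ofReal sstar :=
        iInf₂_le sstar hmem
    _ ≤ ENNReal.ofReal t := ENNReal.ofReal_le_ofReal hst

/-- Lemma 3.1: `Γ` is upper semicontinuous along `d̂`-convergent sequences
in `𝕄`. -/
theorem stmt8 (β : ℝ) (G : ℝ → ℝ)
    (hGcont : ContinuousOn G (Set.Icc (-1 : ℝ) 1))
    (hGmono : MonotoneOn G (Set.Icc (-1 : ℝ) 1)) (hG0 : G 0 = 0)
    {Ω : Type*} [MeasurableSpace Ω] (P : Measure Ω) (θ : Measure ℝ)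
    (Z : Ω → ℝ) (B : ℝ → Ω → ℝ) (hsetup : MVSetup P θ Z B)
    (ℓn : ℕ → ℝ → ℝ) (ℓ : ℝ → ℝ) (hℓn : ∀ n, MemM (ℓn n)) (hℓ : MemM ℓ)
    (hconv : Filter.Tendsto (fun n => dHat (ℓn n) ℓ) Filter.atTop (nhds 0)) :
    ∀ t : ℝ, 0 ≤ t →
      Filter.limsup (fun n => GammaOp P Z B β G (ℓn n) t) Filter.atTop ≤
        GammaOp P Z B β G ℓ t := by
  intro t ht
  have hP : IsProbabilityMeasure P := hsetup.isProb
  classical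
  -- events
  set A : ℕ → Set Ω := fun n =>
    {ω | hitTime (fun s => Z ω + β * s + B s ω - G (ℓn n s)) ≤ ENNReal.ofReal t} with hA
  set Am : Set Ω :=
    {ω | hitTime (fun s => Z ω + β * s + B s ω - G (ℓ s)) ≤ ENNReal.ofReal t} with hAm
  set C : Set Ω := {ω | ContinuousOn (fun s => B s ω) (Set.Ici (0 : ℝ))} with hCdef
  have hCae : ∀ᵐ ω ∂P, ω ∈ C := hsetup.bm.cont
  have hCnull : P Cᶜ = 0 := by
    rw [ae_iff] at hCae
    exact hCae
  set M : ℕ → Set Ω := fun n =>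
    {ω | ∀ k : ℕ, ∃ qq : ℚ, 0 ≤ (qq : ℝ) ∧ (qq : ℝ) ≤ t + 1 / (k + 1) ∧
      Z ω + β * qq + B qq ω - G (ℓn n qq) ≤ 1 / (k + 1)} with hM
  have hMmeas : ∀ n, MeasurableSet (M n) := by
    intro n
    have : M n = ⋂ k : ℕ, ⋃ qq : ℚ,
        ⋃ (_ : 0 ≤ (qq : ℝ) ∧ (qq : ℝ) ≤ t + 1 / (k + 1)),
          {ω | Z ω + β * qq + B qq ω - G (ℓn n qq) ≤ 1 / (k + 1)} := by
      ext ω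
      simp only [hM, mem_setOf_eq, mem_iInter, mem_iUnion]
      constructor
      · intro h k; obtain ⟨qq, h1, h2, h3⟩ := h k; exact ⟨qq, ⟨h1, h2⟩, h3⟩
      · intro h k; obtain ⟨qq, ⟨h1, h2⟩, h3⟩ := h k; exact ⟨qq, h1, h2, h3⟩
    rw [this]
    refine MeasurableSet.iInter fun k => MeasurableSet.iUnion fun qq =>
      MeasurableSet.iUnion fun _ => ?_
    exact measurableSet_le
      (((hsetup.z_meas.add_const (β * qq)).add (hsetup.bm.meas qq)).sub_const _)
      measurable_const
  -- Step 1 : A n ∩ C ⊆ M n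
  have hAM : ∀ n, A n ∩ C ⊆ M n := by
    intro n ω hω
    obtain ⟨hωA, hωC⟩ := hω
    intro k
    have hk1 : (0 : ℝ) < 1 / ((k : ℝ) + 1) := by positivity
    -- extract a hitting point s < t + 1/(k+1)
    have hlt : hitTime (fun s => Z ω + β * s + B s ω - G (ℓn n s)) <
        ENNReal.ofReal (t + 1 / (2 * ((k : ℝ) + 1))) := by
      refine lt_of_le_of_lt hωA ?_
      rw [ENNReal.ofReal_lt_ofReal_iff (by positivity)]
      have : (0 : ℝ) < 1 / (2 * ((k : ℝ) + 1)) := by positivity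
      linarith
    rw [hitTime] at hlt
    simp only [iInf_lt_iff] at hlt
    obtain ⟨s, hsS, hslt⟩ := hlt
    obtain ⟨hs0, hsX⟩ := hsS
    have hst : s < t + 1 / (2 * ((k : ℝ) + 1)) := by
      rw [ENNReal.ofReal_lt_ofReal_iff (by positivity)] at hslt
      exact hslt
    -- right continuity of the path at s
    set f : ℝ → ℝ := fun u => Z ω + β * u + B u ω - G (ℓn n u) with hf
    have hfc : ContinuousWithinAt f (Set.Ici s) s := by
      have hBc : ContinuousWithinAt (fun u => B u ω) (Set.Ici s) s :=
        (hωC s hs0).mono (Ici_subset_Ici.2 hs0)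
      have hGc : ContinuousWithinAt (fun u => G (ℓn n u)) (Set.Ici s) s := by
        refine ContinuousWithinAt.comp
          (hGcont _ ((hℓn n).mem_Icc s (by linarith))) ((hℓn n).right_cont s (by linarith)) ?_
        intro u hu
        exact (hℓn n).mem_Icc u (by simp only [mem_Ici] at hu; linarith)
      exact ((continuousWithinAt_const.add
        ((continuousWithinAt_id.const_smul β).congr (fun x _ => by simp [smul_eq_mul])
          (by simp [smul_eq_mul]))).add hBc).sub hGc
    have hev1 : ∀ᶠ u in nhdsWithin s (Set.Ici s), f u < 1 / ((k : ℝ) + 1) :=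
      hfc.tendsto.eventually (eventually_lt_nhds (lt_of_le_of_lt hsX hk1))
    have hev2 : ∀ᶠ u in nhdsWithin s (Set.Ici s), u < t + 1 / ((k : ℝ) + 1) := by
      refine eventually_nhdsWithin_of_eventually_nhds (eventually_lt_nhds ?_)
      have h1 : (1 : ℝ) / (2 * ((k : ℝ) + 1)) < 1 / ((k : ℝ) + 1) := by
        rw [div_lt_div_iff₀ (by positivity) (by positivity)]
        nlinarith [Nat.cast_nonneg (α := ℝ) k]
      linarith
    obtain ⟨ε, hε0, hball⟩ := Metric.mem_nhdsWithin_iff.1 (hev1.and hev2)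
    obtain ⟨qq, hq1, hq2⟩ := exists_rat_btwn (lt_add_of_pos_right s hε0)
    have hqmem : (qq : ℝ) ∈ Metric.ball s ε ∩ Set.Ici s := by
      constructor
      · rw [Metric.mem_ball, Real.dist_eq, abs_of_pos (by linarith)]
        linarith
      · exact le_of_lt hq1
    obtain ⟨hq3, hq4⟩ := hball hqmem
    exact ⟨qq, by linarith, le_of_lt hq4, by
      have : f qq < 1 / ((k : ℝ) + 1) := hq3
      rw [hf] at this
      linarith⟩
  -- tail unions
  set T : ℕ → Set Ω := fun N => ⋃ (n : ℕ) (_ : N ≤ n), M n with hT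
  have hTmeas : ∀ N, MeasurableSet (T N) :=
    fun N => MeasurableSet.iUnion fun n => MeasurableSet.iUnion fun _ => hMmeas n
  have hTanti : Antitone T := by
    intro N N' hNN'
    refine iUnion₂_subset fun n hn => ?_
    exact subset_iUnion₂ (s := fun n _ => M n) n (le_trans hNN' hn)
  -- Step 2 : ⋂ T ∩ C ⊆ Am
  have hinterAm : (⋂ N, T N) ∩ C ⊆ Am := by
    intro ω hω
    obtain ⟨hωT, hωC⟩ := hω
    have hfreq : ∀ N : ℕ, ∃ n, N ≤ n ∧ ω ∈ M n := by
      intro N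
      have := mem_iInter.1 hωT N
      simp only [hT, mem_iUnion] at this
      obtain ⟨n, hn, hmem⟩ := this
      exact ⟨n, hn, hmem⟩
    have hyp : ∀ j : ℕ, ∃ q : ℝ, 0 ≤ q ∧ q ≤ t + 1 / (j + 1) ∧
        Z ω + β * q + B q ω ≤ 1 / (j + 1) +
          G (min (ℓ (q + 1 / (j + 1)) + 1 / (j + 1)) 1) := by
      intro j
      have hδ0 : (0 : ℝ) < 1 / ((j : ℝ) + 1) := by positivity
      have hδ1 : (1 : ℝ) / ((j : ℝ) + 1) ≤ 1 := by
        rw [div_le_one (by positivity)]; linarith [Nat.cast_nonneg (α := ℝ) j]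
      have hev := eventually_levy_bound hℓn hℓ hconv ht hδ0 hδ1
      obtain ⟨N, hN⟩ := eventually_atTop.1 hev
      obtain ⟨n, hnN, hωM⟩ := hfreq N
      obtain ⟨qq, hq1, hq2, hq3⟩ := hωM j
      have hbound := hN n hnN qq hq1 (le_trans hq2 (by linarith))
      have hℓnq : ℓn n qq ∈ Icc (-1 : ℝ) 1 := (hℓn n).mem_Icc _ (by linarith)
      have hminq : min (ℓ (qq + 1 / ((j : ℝ) + 1)) + 1 / ((j : ℝ) + 1)) 1 ∈
          Icc (-1 : ℝ) 1 := by
        have h0 : 0 ≤ ℓ ((qq : ℝ) + 1 / ((j : ℝ) + 1)) := hℓ.nonneg _ (by linarith)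
        exact ⟨le_min (by linarith) (by norm_num), min_le_right _ _⟩
      have hGle : G (ℓn n qq) ≤
          G (min (ℓ ((qq : ℝ) + 1 / ((j : ℝ) + 1)) + 1 / ((j : ℝ) + 1)) 1) := by
        refine hGmono hℓnq hminq (le_min ?_ hℓnq.2)
        linarith
      exact ⟨qq, hq1, hq2, by linarith⟩
    have := pathwise_limit hGcont hGmono hℓ (z := Z ω) (Bp := fun s => B s ω) hωC ht hyp
    exact this
  -- Step 3 : measure chain
  have hAT : ∀ n, P (A n) ≤ P (T n) := by
    intro n
    have hsub : A n ⊆ T n ∪ Cᶜ := by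
      intro ω hω
      by_cases hc : ω ∈ C
      · exact Or.inl (subset_iUnion₂ (s := fun m _ => M m) n le_rfl (hAM n ⟨hω, hc⟩))
      · exact Or.inr hc
    calc P (A n) ≤ P (T n ∪ Cᶜ) := measure_mono hsub
      _ ≤ P (T n) + P Cᶜ := measure_union_le _ _
      _ = P (T n) := by rw [hCnull, add_zero]
  have hTlim : Tendsto (fun N => P (T N)) atTop (nhds (P (⋂ N, T N))) := by
    have := tendsto_measure_iInter_atTop (μ := P) (s := T)
      (fun i => (hTmeas i).nullMeasurableSet) hTanti ⟨0, measure_ne_top P _⟩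
    exact this
  have hinter_le : P (⋂ N, T N) ≤ P Am := by
    have hsub : (⋂ N, T N) ⊆ Am ∪ Cᶜ := by
      intro ω hω
      by_cases hc : ω ∈ C
      · exact Or.inl (hinterAm ⟨hω, hc⟩)
      · exact Or.inr hc
    calc P (⋂ N, T N) ≤ P (Am ∪ Cᶜ) := measure_mono hsub
      _ ≤ P Am + P Cᶜ := measure_union_le _ _
      _ = P Am := by rw [hCnull, add_zero]
  -- convert to real numbers
  have hGamn : ∀ n, GammaOp P Z B β G (ℓn n) t = (P (A n)).toReal := by
    intro n
    rw [GammaOp, if_neg (not_lt.2 ht)]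
  have hGaml : GammaOp P Z B β G ℓ t = (P Am).toReal := by
    rw [GammaOp, if_neg (not_lt.2 ht)]
  have hv : Tendsto (fun N => (P (T N)).toReal) atTop (nhds ((P (⋂ N, T N)).toReal)) :=
    (ENNReal.tendsto_toReal (measure_ne_top P _)).comp hTlim
  have hle : ∀ n, (P (A n)).toReal ≤ (P (T n)).toReal := by
    intro n
    exact ENNReal.toReal_mono (measure_ne_top P _) (hAT n)
  have hlimsup : Filter.limsup (fun n => GammaOp P Z B β G (ℓn n) t) Filter.atTop ≤
      Filter.limsup (fun n => (P (T n)).toReal) Filter.atTop := by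
    refine Filter.limsup_le_limsup ?_ ?_ ?_
    · filter_upwards with n
      rw [hGamn n]
      exact hle n
    · refine Filter.IsBoundedUnder.isCoboundedUnder_le ?_
      refine isBoundedUnder_of ⟨0, fun n => ?_⟩
      rw [hGamn n]
      exact ENNReal.toReal_nonneg
    · refine isBoundedUnder_of ⟨1, fun n => ?_⟩
      have : P (T n) ≤ 1 := prob_le_one
      calc (P (T n)).toReal ≤ (1 : ℝ≥0∞).toReal :=
            ENNReal.toReal_mono (by norm_num) this
        _ = 1 := by norm_num
  rw [hGaml]
  refine le_trans hlimsup ?_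
  rw [hv.limsup_eq]
  exact ENNReal.toReal_mono (measure_ne_top P _) hinter_le
end
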